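/- Let H = {X₀, X₁, …, Xₙ} be a finite fusion rule algebra with product ∘_H and involution *_H, and let d be a dimension function on H all of whose values d(X_i) are positive integers. Let Y₁ be a new element, put F = {X₀, …, Xₙ, Y₁}, and define a bilinear product ∘_F on ℂF by X_i ∘_F X_j := X_i ∘_H X_j, X_i ∘_F Y₁ := d(X_i)·Y₁, Y₁ ∘_F X_i := d(X_i)·Y₁, and Y₁ ∘_F Y₁ := R(H) = Σ_{k=0}^{n} d(X_k)·X_k, with involution X_i* := X_i^{*_H} and Y₁* := Y₁. Then (F, ∘_F, *) is a fusion rule algebra; in particular ∘_F is associative: (X_i ∘_F X_j) ∘_F X_k = X_i ∘_F (X_j ∘_F X_k), (X_i ∘_F X_j) ∘_F Y₁ = X_i ∘_F (X_j ∘_F Y₁), (X_i ∘_F Y₁) ∘_F Y₁ = X_i ∘_F (Y₁ ∘_F Y₁), and (Y₁ ∘_F Y₁) ∘_F Y₁ = Y₁ ∘_F (Y₁ ∘_F Y₁). -/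

import Mathlib

open Finsupp

/-- The conjugate-linear extension to `ℂF` of an involution `inv : F → F`:
`(Σ aᵢ Xᵢ)* = Σ conj(aᵢ) Xᵢ*`. -/
noncomputable def fstar {F : Type*} (inv : F → F) (u : F →₀ ℂ) : F →₀ ℂ :=
  Finsupp.mapDomain inv (Finsupp.mapRange (starRingEnd ℂ) (map_zero _) u)

/-- A fusion rule algebra on a set `F`: an associative bilinear product `mul` on the free
complex vector space `F →₀ ℂ` with unit the basis vector at `one`, an involution `inv`
making `(ℂF, mul, *)` a `*`-algebra, such that products of basis elements have
non-negative integer coefficients, and the coefficient at `one` of `Xᵢ ∘ Xⱼ` is `1` if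
`Xⱼ = Xᵢ*` and `0` otherwise. -/
structure FusionRuleAlgebra (F : Type*) [DecidableEq F] where
  mul : (F →₀ ℂ) →ₗ[ℂ] (F →₀ ℂ) →ₗ[ℂ] (F →₀ ℂ)
  one : F
  inv : F → F
  inv_involutive : Function.Involutive inv
  mul_assoc : ∀ u v w, mul (mul u v) w = mul u (mul v w)
  one_mul : ∀ u, mul (Finsupp.single one 1) u = u
  mul_one : ∀ u, mul u (Finsupp.single one 1) = u
  star_mul : ∀ u v, fstar inv (mul u v) = mul (fstar inv v) (fstar inv u)
  coeff_nat : ∀ i j k, ∃ n : ℕ,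
    mul (Finsupp.single i 1) (Finsupp.single j 1) k = (n : ℂ)
  coeff_one : ∀ i j,
    mul (Finsupp.single i 1) (Finsupp.single j 1) one = if j = inv i then 1 else 0

/-- Bilinear extension to `ℂα` of a product defined on basis elements. -/
noncomputable def extendBilin {α : Type*} (b : α → α → (α →₀ ℂ)) :
    (α →₀ ℂ) →ₗ[ℂ] (α →₀ ℂ) →ₗ[ℂ] (α →₀ ℂ) :=
  Finsupp.lsum ℂ fun i =>
    LinearMap.toSpanSingleton ℂ _
      (Finsupp.lsum ℂ fun j => LinearMap.toSpanSingleton ℂ _ (b i j))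

/-- The product on basis elements for the join `H ∨_F ℤ₂`: on `ℂH` it is the product of
`H`; `X_i ∘ Y₁ = Y₁ ∘ X_i = d(X_i)·Y₁`; and `Y₁ ∘ Y₁ = R(H) = Σ_k d(X_k)·X_k`.
Here `Y₁` is represented by `none` and `X_i` by `some i`. -/
noncomputable def joinBasisMul {H : Type*} [Fintype H] [DecidableEq H]
    (A : FusionRuleAlgebra H) (d : H → ℕ) :
    Option H → Option H → (Option H →₀ ℂ)
  | Option.some i, Option.some j =>
      Finsupp.mapDomain Option.some (A.mul (Finsupp.single i 1) (Finsupp.single j 1))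
  | Option.some i, Option.none => (d i : ℂ) • Finsupp.single Option.none 1
  | Option.none, Option.some j => (d j : ℂ) • Finsupp.single Option.none 1
  | Option.none, Option.none => ∑ k, (d k : ℂ) • Finsupp.single (Option.some k) 1

/-- The bilinear product of the join `H ∨_F ℤ₂` on `ℂ(H ∪ {Y₁})`. -/
noncomputable def joinMul {H : Type*} [Fintype H] [DecidableEq H]
    (A : FusionRuleAlgebra H) (d : H → ℕ) :
    (Option H →₀ ℂ) →ₗ[ℂ] (Option H →₀ ℂ) →ₗ[ℂ] (Option H →₀ ℂ) :=
  extendBilin (joinBasisMul A d)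


namespace JoinAux
open Finsupp

lemma expand {α} [Fintype α] [DecidableEq α] (u : α →₀ ℂ) :
    u = ∑ a, u a • Finsupp.single a 1 := by
  ext b
  rw [Finsupp.finset_sum_apply]
  simp [Finsupp.single_apply]

lemma extendBilin_ss {α : Type*} [DecidableEq α] (b : α → α → (α →₀ ℂ)) (i j : α) (x y : ℂ) :
    extendBilin b (Finsupp.single i x) (Finsupp.single j y) = (x*y) • b i j := by
  simp [extendBilin, Finsupp.lsum_single, LinearMap.toSpanSingleton_apply, mul_smul]

lemma fstar_single {F : Type*} (inv : F → F) (a : F) (x : ℂ) :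
    fstar inv (Finsupp.single a x) = Finsupp.single (inv a) ((starRingEnd ℂ) x) := by
  simp [fstar, Finsupp.mapRange_single, Finsupp.mapDomain_single]

lemma fstar_smul {F : Type*} (inv : F → F) (c : ℂ) (u : F →₀ ℂ) :
    fstar inv (c • u) = (starRingEnd ℂ) c • fstar inv u := by
  have : Finsupp.mapRange (starRingEnd ℂ) (map_zero _) (c • u)
      = (starRingEnd ℂ) c • Finsupp.mapRange (starRingEnd ℂ) (map_zero _) u := by
    ext a; simp
  rw [fstar, this, Finsupp.mapDomain_smul, fstar]

lemma fstar_add {F : Type*} (inv : F → F) (u v : F →₀ ℂ) :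
    fstar inv (u + v) = fstar inv u + fstar inv v := by
  have : Finsupp.mapRange (starRingEnd ℂ) (map_zero _) (u + v)
      = Finsupp.mapRange (starRingEnd ℂ) (map_zero _) u
        + Finsupp.mapRange (starRingEnd ℂ) (map_zero _) v := by
    ext a; simp
  rw [fstar, this, Finsupp.mapDomain_add]; rfl

lemma fstar_sum {F ι : Type*} (inv : F → F) (s : Finset ι) (f : ι → (F →₀ ℂ)) :
    fstar inv (∑ x ∈ s, f x) = ∑ x ∈ s, fstar inv (f x) := by
  classical
  induction s using Finset.induction with
  | empty => simp [fstar]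
  | insert _ _ h ih =>
      rw [Finset.sum_insert h, Finset.sum_insert h, ← ih, fstar_add]

lemma fstar_apply_inv {F : Type*} (inv : F → F) (hinv : Function.Involutive inv)
    (u : F →₀ ℂ) (k : F) : fstar inv u (inv k) = (starRingEnd ℂ) (u k) := by
  rw [fstar, Finsupp.mapDomain_apply hinv.injective, Finsupp.mapRange_apply]


section Alg
variable {H : Type*} [Fintype H] [DecidableEq H] (A : FusionRuleAlgebra H)

/-- coefficient `a_{ij}^k` as a complex number -/
noncomputable def cf (i j k : H) : ℂ := A.mul (Finsupp.single i 1) (Finsupp.single j 1) k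

lemma cf_conj (i j k : H) : (starRingEnd ℂ) (cf A i j k) = cf A i j k := by
  obtain ⟨n, hn⟩ := A.coeff_nat i j k
  rw [cf, hn]; simp

lemma mul_left_expand (u v : H →₀ ℂ) :
    A.mul u v = ∑ a, u a • A.mul (Finsupp.single a 1) v := by
  have : A.mul u v = A.mul (∑ a, u a • Finsupp.single a 1) v := by rw [← expand u]
  rw [this, map_sum, LinearMap.sum_apply]
  refine Finset.sum_congr rfl fun a _ => ?_
  rw [map_smul, LinearMap.smul_apply]

lemma mul_right_expand (u v : H →₀ ℂ) :
    A.mul u v = ∑ b, v b • A.mul u (Finsupp.single b 1) := by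
  have : A.mul u v = A.mul u (∑ b, v b • Finsupp.single b 1) := by rw [← expand v]
  rw [this, map_sum]
  refine Finset.sum_congr rfl fun a _ => ?_
  rw [map_smul]

lemma eval_right (u : H →₀ ℂ) (k : H) :
    A.mul u (Finsupp.single (A.inv k) 1) A.one = u k := by
  rw [mul_left_expand]
  rw [Finsupp.finset_sum_apply]
  simp only [Finsupp.smul_apply, A.coeff_one, smul_eq_mul, mul_ite, mul_one, mul_zero,
    A.inv_involutive.injective.eq_iff]
  simp [eq_comm]

lemma eval_left (i : H) (u : H →₀ ℂ) :
    A.mul (Finsupp.single i 1) u A.one = u (A.inv i) := by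
  rw [mul_right_expand]
  rw [Finsupp.finset_sum_apply]
  simp only [Finsupp.smul_apply, A.coeff_one, smul_eq_mul, mul_ite, mul_one, mul_zero]
  simp

/-- Frobenius reciprocity rotation -/
lemma cf_F1 (i j k : H) : cf A i j k = cf A j (A.inv k) (A.inv i) := by
  have h := A.mul_assoc (Finsupp.single i 1) (Finsupp.single j 1) (Finsupp.single (A.inv k) 1)
  have h2 := congrArg (fun w => w A.one) h
  simpa [eval_right, eval_left, cf] using h2

/-- star relation -/
lemma cf_SR (i j k : H) : cf A i j k = cf A (A.inv j) (A.inv i) (A.inv k) := by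
  have h := A.star_mul (Finsupp.single i 1) (Finsupp.single j 1)
  have h2 := congrArg (fun w => w (A.inv k)) h
  simp only [fstar_single, map_one] at h2
  rw [fstar_apply_inv A.inv A.inv_involutive] at h2
  rw [← cf_conj, cf, h2]; rfl

lemma cf_NT (i j k : H) : cf A i j k = cf A (A.inv i) k j := by
  rw [cf_SR, cf_F1, A.inv_involutive, A.inv_involutive]

variable (d : H → ℕ) (hd : ∀ i, 0 < d i)
  (hdim : ∀ i j, (d i : ℂ) * (d j : ℂ)
      = ∑ k, A.mul (Finsupp.single i 1) (Finsupp.single j 1) k * (d k : ℂ))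

include hdim in
lemma hdim' : ∀ i j, (d i : ℂ) * (d j : ℂ) = ∑ k, cf A i j k * (d k : ℂ) := hdim

include hd hdim in
lemma d_one : (d A.one : ℂ) = 1 := by
  have h := hdim' A d hdim A.one A.one
  have hmul : A.mul (Finsupp.single A.one 1) (Finsupp.single A.one 1)
      = Finsupp.single A.one (1:ℂ) := A.one_mul _
  have h2 : ∑ k, cf A A.one A.one k * (d k : ℂ) = (d A.one : ℂ) := by
    simp only [cf, hmul]
    simp [Finsupp.single_apply, ite_mul]
  rw [h2] at h
  have hne : (d A.one : ℂ) ≠ 0 := Nat.cast_ne_zero.mpr (hd A.one).ne'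
  have h3 : (d A.one : ℂ) * (d A.one : ℂ) = 1 * (d A.one : ℂ) := by rw [one_mul]; exact h
  exact mul_right_cancel₀ hne h3

include hd hdim in
lemma d_inv (i : H) : (d (A.inv i) : ℂ) = (d i : ℂ) := by
  classical
  set S : ℂ := ∑ k, (d k : ℂ) * (d k : ℂ) with hS
  have hSnat : S = ((∑ k, d k * d k : ℕ) : ℂ) := by rw [hS]; norm_cast
  have hSne : S ≠ 0 := by
    rw [hSnat]
    have : 0 < ∑ k, d k * d k := by
      refine Finset.sum_pos (fun k _ => Nat.mul_pos (hd k) (hd k)) ⟨A.one, Finset.mem_univ _⟩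
    exact_mod_cast this.ne'
  have key1 : ∀ k, ∑ l, cf A i l k * (d l : ℂ) = (d (A.inv i) : ℂ) * (d k : ℂ) := by
    intro k
    calc ∑ l, cf A i l k * (d l : ℂ) = ∑ l, cf A (A.inv i) k l * (d l : ℂ) := by
          refine Finset.sum_congr rfl fun l _ => ?_; rw [cf_NT]
      _ = (d (A.inv i) : ℂ) * (d k : ℂ) := (hdim' A d hdim _ _).symm
  have hboth : (d (A.inv i) : ℂ) * S = (d i : ℂ) * S := by
    calc (d (A.inv i) : ℂ) * S = ∑ k, (d (A.inv i) : ℂ) * (d k : ℂ) * (d k : ℂ) := by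
          rw [hS, Finset.mul_sum]; refine Finset.sum_congr rfl fun k _ => by ring
      _ = ∑ k, (∑ l, cf A i l k * (d l : ℂ)) * (d k : ℂ) := by
          refine Finset.sum_congr rfl fun k _ => by rw [key1]
      _ = ∑ k, ∑ l, cf A i l k * (d l : ℂ) * (d k : ℂ) := by
          refine Finset.sum_congr rfl fun k _ => by rw [Finset.sum_mul]
      _ = ∑ l, ∑ k, cf A i l k * (d l : ℂ) * (d k : ℂ) := Finset.sum_comm
      _ = ∑ l, (d l : ℂ) * ∑ k, cf A i l k * (d k : ℂ) := by
          refine Finset.sum_congr rfl fun l _ => ?_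
          rw [Finset.mul_sum]
          refine Finset.sum_congr rfl fun k _ => by ring
      _ = ∑ l, (d l : ℂ) * ((d i : ℂ) * (d l : ℂ)) := by
          refine Finset.sum_congr rfl fun l _ => by rw [← hdim' A d hdim]
      _ = (d i : ℂ) * S := by
          rw [hS, Finset.mul_sum]; refine Finset.sum_congr rfl fun l _ => by ring
  exact mul_right_cancel₀ hSne hboth

include hd hdim in
lemma identA (i l : H) : ∑ k, cf A i k l * (d k : ℂ) = (d i : ℂ) * (d l : ℂ) := by
  calc ∑ k, cf A i k l * (d k : ℂ) = ∑ k, cf A (A.inv i) l k * (d k : ℂ) := by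
        refine Finset.sum_congr rfl fun k _ => by rw [cf_NT]
    _ = (d (A.inv i) : ℂ) * (d l : ℂ) := (hdim' A d hdim _ _).symm
    _ = (d i : ℂ) * (d l : ℂ) := by rw [d_inv A d hd hdim]

include hd hdim in
lemma identB (k l : H) : ∑ m, cf A m k l * (d m : ℂ) = (d k : ℂ) * (d l : ℂ) := by
  calc ∑ m, cf A m k l * (d m : ℂ) = ∑ m, cf A k (A.inv l) (A.inv m) * (d m : ℂ) := by
        refine Finset.sum_congr rfl fun m _ => by rw [cf_F1]
    _ = ∑ m, cf A k (A.inv l) m * (d (A.inv m) : ℂ) := by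
        exact Fintype.sum_equiv A.inv_involutive.toPerm _ _ (fun m => by
          simp [Function.Involutive.coe_toPerm, A.inv_involutive m])
    _ = ∑ m, cf A k (A.inv l) m * (d m : ℂ) := by
        refine Finset.sum_congr rfl fun m _ => by rw [d_inv A d hd hdim]
    _ = (d k : ℂ) * (d (A.inv l) : ℂ) := (hdim' A d hdim _ _).symm
    _ = (d k : ℂ) * (d l : ℂ) := by rw [d_inv A d hd hdim]


-- join-side lemmas

lemma mapd_expand (w : H →₀ ℂ) :
    Finsupp.mapDomain Option.some w = ∑ m, w m • Finsupp.single (Option.some m) (1:ℂ) := by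
  conv_lhs => rw [expand w]
  rw [Finsupp.mapDomain_finset_sum]
  refine Finset.sum_congr rfl fun m _ => ?_
  rw [Finsupp.mapDomain_smul, Finsupp.mapDomain_single]

lemma jm_ss (i j : H) :
    joinMul A d (Finsupp.single (some i) 1) (Finsupp.single (some j) 1)
      = Finsupp.mapDomain Option.some (A.mul (Finsupp.single i 1) (Finsupp.single j 1)) := by
  rw [joinMul, extendBilin_ss]
  simp [joinBasisMul]

lemma jm_sn (i : H) :
    joinMul A d (Finsupp.single (some i) 1) (Finsupp.single none 1)
      = (d i : ℂ) • Finsupp.single none 1 := by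
  rw [joinMul, extendBilin_ss]; simp [joinBasisMul]

lemma jm_ns (j : H) :
    joinMul A d (Finsupp.single none 1) (Finsupp.single (some j) 1)
      = (d j : ℂ) • Finsupp.single none 1 := by
  rw [joinMul, extendBilin_ss]; simp [joinBasisMul]

lemma jm_nn :
    joinMul A d (Finsupp.single none 1) (Finsupp.single none 1)
      = ∑ k, (d k : ℂ) • Finsupp.single (some k) (1:ℂ) := by
  rw [joinMul, extendBilin_ss]; simp [joinBasisMul]

lemma jm_smul_left (x : ℂ) (u v : Option H →₀ ℂ) :
    joinMul A d (x • u) v = x • joinMul A d u v := by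
  rw [map_smul, LinearMap.smul_apply]

lemma jm_sum_left {ι : Type*} (s : Finset ι) (f : ι → (Option H →₀ ℂ)) (v : Option H →₀ ℂ) :
    joinMul A d (∑ x ∈ s, f x) v = ∑ x ∈ s, joinMul A d (f x) v := by
  rw [map_sum, LinearMap.sum_apply]

lemma jm_mapd_left (w : H →₀ ℂ) (k : H) :
    joinMul A d (Finsupp.mapDomain Option.some w) (Finsupp.single (some k) 1)
      = Finsupp.mapDomain Option.some (A.mul w (Finsupp.single k 1)) := by
  rw [mapd_expand, jm_sum_left]
  rw [mul_left_expand A w (Finsupp.single k 1), Finsupp.mapDomain_finset_sum]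
  refine Finset.sum_congr rfl fun m _ => ?_
  rw [jm_smul_left, jm_ss, Finsupp.mapDomain_smul]

lemma jm_mapd_right (i : H) (w : H →₀ ℂ) :
    joinMul A d (Finsupp.single (some i) 1) (Finsupp.mapDomain Option.some w)
      = Finsupp.mapDomain Option.some (A.mul (Finsupp.single i 1) w) := by
  rw [mapd_expand, map_sum]
  rw [mul_right_expand A (Finsupp.single i 1) w, Finsupp.mapDomain_finset_sum]
  refine Finset.sum_congr rfl fun m _ => ?_
  rw [map_smul, jm_ss, Finsupp.mapDomain_smul]

lemma jm_mapd_none (w : H →₀ ℂ) :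
    joinMul A d (Finsupp.mapDomain Option.some w) (Finsupp.single none 1)
      = (∑ m, w m * (d m : ℂ)) • Finsupp.single none 1 := by
  rw [mapd_expand, jm_sum_left, Finset.sum_smul]
  refine Finset.sum_congr rfl fun m _ => ?_
  rw [jm_smul_left, jm_sn, smul_smul]

lemma jm_none_mapd (w : H →₀ ℂ) :
    joinMul A d (Finsupp.single none 1) (Finsupp.mapDomain Option.some w)
      = (∑ m, w m * (d m : ℂ)) • Finsupp.single none 1 := by
  rw [mapd_expand, map_sum, Finset.sum_smul]
  refine Finset.sum_congr rfl fun m _ => ?_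
  rw [map_smul, jm_ns, smul_smul]

include hd hdim in
lemma joinAssocBasis : ∀ a b c : Option H,
    joinMul A d (joinMul A d (Finsupp.single a 1) (Finsupp.single b 1)) (Finsupp.single c 1)
      = joinMul A d (Finsupp.single a 1)
          (joinMul A d (Finsupp.single b 1) (Finsupp.single c 1)) := by
  have expand_ss : ∀ i j : H, joinMul A d (Finsupp.single (some i) 1) (Finsupp.single (some j) 1)
      = ∑ l, cf A i j l • Finsupp.single (some l) (1:ℂ) := by
    intro i j; rw [jm_ss, mapd_expand]; rfl
  rintro (_|i) (_|j) (_|k)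
  · -- nnn
    rw [jm_nn, jm_sum_left, map_sum]
    refine Finset.sum_congr rfl fun m _ => ?_
    rw [jm_smul_left, map_smul, jm_sn, jm_ns]
  · -- nns
    rw [jm_nn, jm_ns, jm_sum_left, map_smul, jm_nn, Finset.smul_sum]
    calc ∑ m, joinMul A d ((d m : ℂ) • Finsupp.single (some m) 1) (Finsupp.single (some k) 1)
        = ∑ m, (d m : ℂ) • ∑ l, cf A m k l • Finsupp.single (some l) (1:ℂ) := by
          refine Finset.sum_congr rfl fun m _ => ?_
          rw [jm_smul_left, expand_ss]
      _ = ∑ m, ∑ l, (cf A m k l * (d m : ℂ)) • Finsupp.single (some l) (1:ℂ) := by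
          refine Finset.sum_congr rfl fun m _ => ?_
          rw [Finset.smul_sum]
          refine Finset.sum_congr rfl fun l _ => by rw [smul_smul, mul_comm]
      _ = ∑ l, ∑ m, (cf A m k l * (d m : ℂ)) • Finsupp.single (some l) (1:ℂ) :=
          Finset.sum_comm
      _ = ∑ l, (∑ m, cf A m k l * (d m : ℂ)) • Finsupp.single (some l) (1:ℂ) := by
          refine Finset.sum_congr rfl fun l _ => (Finset.sum_smul).symm
      _ = ∑ l, (d k : ℂ) • ((d l : ℂ) • Finsupp.single (some l) (1:ℂ)) := by
          refine Finset.sum_congr rfl fun l _ => ?_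
          rw [identB A d hd hdim, mul_smul]
  · -- nsn
    rw [jm_ns, jm_sn, jm_smul_left, map_smul]
  · -- nss
    rw [jm_ss, jm_none_mapd, jm_ns, jm_smul_left, jm_ns, smul_smul]
    congr 1
    exact hdim j k
  · -- snn
    rw [jm_sn, jm_smul_left, jm_nn, map_sum]
    calc (d i : ℂ) • ∑ l, (d l : ℂ) • Finsupp.single (some l) (1:ℂ)
        = ∑ l, ((d i : ℂ) * (d l : ℂ)) • Finsupp.single (some l) (1:ℂ) := by
          rw [Finset.smul_sum]
          refine Finset.sum_congr rfl fun l _ => smul_smul _ _ _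
      _ = ∑ l, (∑ k, cf A i k l * (d k : ℂ)) • Finsupp.single (some l) (1:ℂ) := by
          refine Finset.sum_congr rfl fun l _ => by rw [identA A d hd hdim]
      _ = ∑ l, ∑ k, (cf A i k l * (d k : ℂ)) • Finsupp.single (some l) (1:ℂ) := by
          refine Finset.sum_congr rfl fun l _ => Finset.sum_smul
      _ = ∑ k, ∑ l, (cf A i k l * (d k : ℂ)) • Finsupp.single (some l) (1:ℂ) :=
          Finset.sum_comm
      _ = ∑ k, (d k : ℂ) • ∑ l, cf A i k l • Finsupp.single (some l) (1:ℂ) := by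
          refine Finset.sum_congr rfl fun k _ => ?_
          rw [Finset.smul_sum]
          refine Finset.sum_congr rfl fun l _ => by rw [smul_smul, mul_comm]
      _ = ∑ k, joinMul A d (Finsupp.single (some i) 1) ((d k : ℂ) • Finsupp.single (some k) 1) := by
          refine Finset.sum_congr rfl fun k _ => ?_
          rw [map_smul, expand_ss]
  · -- sns
    rw [jm_sn, jm_ns, jm_smul_left, map_smul, jm_ns, jm_sn, smul_smul, smul_smul, mul_comm]
  · -- ssn
    rw [jm_ss, jm_mapd_none, jm_sn, map_smul, jm_sn, smul_smul]
    congr 1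
    rw [mul_comm]
    exact (hdim i j).symm
  · -- sss
    rw [jm_ss, jm_ss, jm_mapd_left, jm_mapd_right, A.mul_assoc]


include hd hdim in
lemma joinAssoc (u v w : Option H →₀ ℂ) :
    joinMul A d (joinMul A d u v) w = joinMul A d u (joinMul A d v w) := by
  have key := joinAssocBasis A d hd hdim
  rw [expand u, expand v, expand w]
  simp only [map_sum, LinearMap.sum_apply, map_smul, LinearMap.smul_apply, Finset.smul_sum,
    smul_smul]
  refine Finset.sum_congr rfl fun a _ => ?_
  refine Finset.sum_congr rfl fun b _ => ?_
  refine Finset.sum_congr rfl fun c _ => ?_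
  rw [key, ← mul_assoc]

include hd hdim in
lemma join_one_mul (u : Option H →₀ ℂ) :
    joinMul A d (Finsupp.single (some A.one) 1) u = u := by
  have base : ∀ b : Option H, joinMul A d (Finsupp.single (some A.one) 1)
      (Finsupp.single b 1) = Finsupp.single b 1 := by
    rintro (_|j)
    · rw [jm_sn, d_one A d hd hdim, one_smul]
    · rw [jm_ss, A.one_mul, Finsupp.mapDomain_single]
  conv_lhs => rw [expand u]
  rw [map_sum]
  simp only [map_smul, base]
  exact (expand u).symm

include hd hdim in
lemma join_mul_one (u : Option H →₀ ℂ) :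
    joinMul A d u (Finsupp.single (some A.one) 1) = u := by
  have base : ∀ b : Option H, joinMul A d (Finsupp.single b 1)
      (Finsupp.single (some A.one) 1) = Finsupp.single b 1 := by
    rintro (_|j)
    · rw [jm_ns, d_one A d hd hdim, one_smul]
    · rw [jm_ss, A.mul_one, Finsupp.mapDomain_single]
  conv_lhs => rw [expand u]
  rw [jm_sum_left]
  simp only [jm_smul_left, base]
  exact (expand u).symm

lemma fstar_mapd (w : H →₀ ℂ) :
    fstar (Option.map A.inv) (Finsupp.mapDomain Option.some w)
      = Finsupp.mapDomain Option.some (fstar A.inv w) := by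
  rw [fstar, ← Finsupp.mapDomain_mapRange _ _ _ _ (fun x y => by simp), ← Finsupp.mapDomain_comp]
  rw [fstar, ← Finsupp.mapDomain_comp]
  rfl

include hd hdim in
lemma join_star_base : ∀ a b : Option H,
    fstar (Option.map A.inv) (joinMul A d (Finsupp.single a 1) (Finsupp.single b 1))
      = joinMul A d (fstar (Option.map A.inv) (Finsupp.single b 1))
          (fstar (Option.map A.inv) (Finsupp.single a 1)) := by
  have hfs : ∀ a : Option H, fstar (Option.map A.inv) (Finsupp.single a (1:ℂ))
      = Finsupp.single (Option.map A.inv a) 1 := by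
    intro a; rw [fstar_single, map_one]
  rintro (_|i) (_|j)
  · -- nn
    rw [jm_nn, fstar_sum, hfs]
    simp only [Option.map_none]
    rw [jm_nn]
    refine Fintype.sum_equiv A.inv_involutive.toPerm _ _ fun k => ?_
    rw [fstar_smul, hfs]
    simp only [Option.map_some, Function.Involutive.coe_toPerm, map_natCast]
    rw [d_inv A d hd hdim]
  · -- ns
    rw [jm_ns, fstar_smul, hfs, hfs]
    simp only [Option.map_none, Option.map_some]
    rw [jm_sn, d_inv A d hd hdim]
    simp
  · -- sn
    rw [jm_sn, fstar_smul, hfs, hfs]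
    simp only [Option.map_none, Option.map_some]
    rw [jm_ns, d_inv A d hd hdim]
    simp
  · -- ss
    rw [jm_ss, fstar_mapd, A.star_mul, hfs, hfs]
    simp only [Option.map_some]
    rw [jm_ss, fstar_single, fstar_single, map_one]

include hd hdim in
lemma join_star_mul (u v : Option H →₀ ℂ) :
    fstar (Option.map A.inv) (joinMul A d u v)
      = joinMul A d (fstar (Option.map A.inv) v) (fstar (Option.map A.inv) u) := by
  have base := join_star_base A d hd hdim
  rw [expand u, expand v]
  simp only [map_sum, LinearMap.sum_apply, map_smul, LinearMap.smul_apply, fstar_sum,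
    fstar_smul, Finset.smul_sum, smul_smul, map_mul, base]
  rw [Finset.sum_comm]
  refine Finset.sum_congr rfl fun a _ => ?_
  refine Finset.sum_congr rfl fun b _ => ?_
  rw [mul_comm]


lemma join_coeff_nat (a b k : Option H) :
    ∃ n : ℕ, joinMul A d (Finsupp.single a 1) (Finsupp.single b 1) k = (n : ℂ) := by
  rcases a with _|i <;> rcases b with _|j
  · -- nn
    rcases k with _|l
    · exact ⟨0, by rw [jm_nn, Finsupp.finset_sum_apply]; simp⟩
    · refine ⟨d l, ?_⟩
      rw [jm_nn, Finsupp.finset_sum_apply]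
      simp [Finsupp.single_apply]
  · -- ns
    rcases k with _|l
    · exact ⟨d j, by rw [jm_ns]; simp⟩
    · exact ⟨0, by rw [jm_ns]; simp⟩
  · -- sn
    rcases k with _|l
    · exact ⟨d i, by rw [jm_sn]; simp⟩
    · exact ⟨0, by rw [jm_sn]; simp⟩
  · -- ss
    rcases k with _|l
    · refine ⟨0, ?_⟩
      rw [jm_ss, Finsupp.mapDomain_notin_range]
      · simp
      · simp
    · obtain ⟨n, hn⟩ := A.coeff_nat i j l
      refine ⟨n, ?_⟩
      rw [jm_ss, Finsupp.mapDomain_apply (Option.some_injective H), hn]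

include hd hdim in
lemma join_coeff_one (a b : Option H) :
    joinMul A d (Finsupp.single a 1) (Finsupp.single b 1) (some A.one)
      = if b = Option.map A.inv a then 1 else 0 := by
  rcases a with _|i <;> rcases b with _|j
  · -- nn
    rw [jm_nn, Finsupp.finset_sum_apply]
    simp [Finsupp.single_apply, d_one A d hd hdim]
  · -- ns
    rw [jm_ns]
    simp
  · -- sn
    rw [jm_sn]
    simp
  · -- ss
    rw [jm_ss, Finsupp.mapDomain_apply (Option.some_injective H), A.coeff_one]
    simp only [Option.map_some, Option.some.injEq]

include hd hdim in
noncomputable def joinFRA : FusionRuleAlgebra (Option H) where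
  mul := joinMul A d
  one := some A.one
  inv := Option.map A.inv
  inv_involutive := fun a => by cases a <;> simp [A.inv_involutive _]
  mul_assoc := joinAssoc A d hd hdim
  one_mul := join_one_mul A d hd hdim
  mul_one := join_mul_one A d hd hdim
  star_mul := join_star_mul A d hd hdim
  coeff_nat := join_coeff_nat A d
  coeff_one := join_coeff_one A d hd hdim

end Alg
end JoinAux
/-- The join of a finite fusion rule algebra `H` (with integer-valued dimension function
`d`) by the cyclic group of order two is again a fusion rule algebra; in particular the
product `∘_F` is associative, on `ℂH`, mixing in one copy of `Y₁`, two copies of `Y₁`,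
and on three copies of `Y₁`. -/
theorem join_isFusionRuleAlgebra {H : Type*} [Fintype H] [DecidableEq H]
    (A : FusionRuleAlgebra H) (d : H → ℕ) (hd : ∀ i, 0 < d i)
    (hdim : ∀ i j, (d i : ℂ) * (d j : ℂ)
      = ∑ k, A.mul (Finsupp.single i 1) (Finsupp.single j 1) k * (d k : ℂ)) :
    (∃ B : FusionRuleAlgebra (Option H),
        B.mul = joinMul A d ∧ B.one = some A.one ∧ B.inv = Option.map A.inv) ∧
      (∀ i j k : H,
        joinMul A d (joinMul A d (Finsupp.single (some i) 1) (Finsupp.single (some j) 1))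
            (Finsupp.single (some k) 1)
          = joinMul A d (Finsupp.single (some i) 1)
              (joinMul A d (Finsupp.single (some j) 1) (Finsupp.single (some k) 1))) ∧
      (∀ i j : H,
        joinMul A d (joinMul A d (Finsupp.single (some i) 1) (Finsupp.single (some j) 1))
            (Finsupp.single none 1)
          = joinMul A d (Finsupp.single (some i) 1)
              (joinMul A d (Finsupp.single (some j) 1) (Finsupp.single none 1))) ∧
      (∀ i : H,
        joinMul A d (joinMul A d (Finsupp.single (some i) 1) (Finsupp.single none 1))
            (Finsupp.single none 1)
          = joinMul A d (Finsupp.single (some i) 1)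
              (joinMul A d (Finsupp.single none 1) (Finsupp.single none 1))) ∧
      (joinMul A d (joinMul A d (Finsupp.single none 1) (Finsupp.single none 1))
            (Finsupp.single none 1)
        = joinMul A d (Finsupp.single none 1)
            (joinMul A d (Finsupp.single none 1) (Finsupp.single none 1))) := by
  refine ⟨⟨JoinAux.joinFRA A d hd hdim, rfl, rfl, rfl⟩, ?_, ?_, ?_, ?_⟩
  · intro i j k
    exact JoinAux.joinAssocBasis A d hd hdim (some i) (some j) (some k)
  · intro i j
    exact JoinAux.joinAssocBasis A d hd hdim (some i) (some j) none
  · intro i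
    exact JoinAux.joinAssocBasis A d hd hdim (some i) none none
  · exact JoinAux.joinAssocBasis A d hd hdim none none none
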